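/- Let f : ℝ → ℝ be continuous nondecreasing, φ a lower semicontinuous bounded probability density with support exactly [−1,1] (positivity set (−1,1)), and consider the Markov chain with kernel density ρ(x,y) = φ(y − f(x)). Let B = {x ∈ ℝ : f(x) − x ∈ (−1,1)}. Then the communicating classes of the chain (maximal sets on which the resolvent density ρ̃ = Σ 2^{-k}ρ^k is everywhere positive) are exactly the connected components of B. -/

import Mathlib

open MeasureTheory
open scoped ENNReal

/-- Iterated transition densities on `ℝ` (ℝ≥0∞-valued): `iterK ρ 1 = ρ` and
`iterK ρ (k+1) x y = ∫ z, iterK ρ k x z · ρ(z, y) dz`; `iterK ρ 0` is junk. -/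
noncomputable def iterK (ρ : ℝ → ℝ → ℝ≥0∞) : ℕ → ℝ → ℝ → ℝ≥0∞
  | 0 => fun _ _ => 0
  | 1 => ρ
  | (k + 2) => fun x y => ∫⁻ z, iterK ρ (k + 1) x z * ρ z y

/-- The resolvent density `ρ̃(x,y) = ∑_{k ≥ 1} 2^{-k} ρ^k(x,y)`. -/
noncomputable def resolventK (ρ : ℝ → ℝ → ℝ≥0∞) (x y : ℝ) : ℝ≥0∞ :=
  ∑' k : ℕ, ((2 : ℝ≥0∞)⁻¹) ^ (k + 1) * iterK ρ (k + 1) x y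

/-- A communicating class: a nonempty maximal set on which the resolvent density is
everywhere positive. -/
def IsCommClassR (ρ : ℝ → ℝ → ℝ≥0∞) (A : Set ℝ) : Prop :=
  A.Nonempty ∧ (∀ x ∈ A, ∀ y ∈ A, 0 < resolventK ρ x y) ∧
    ∀ B, A ⊆ B → (∀ x ∈ B, ∀ y ∈ B, 0 < resolventK ρ x y) → B = A

/-! ### Auxiliary material -/

/-- Chains of pointwise-positive one-step densities, matching the shape of `iterK`. -/
def chainR (ρ : ℝ → ℝ → ℝ≥0∞) : ℕ → ℝ → ℝ → Prop
  | 0 => fun _ _ => False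
  | 1 => fun x y => 0 < ρ x y
  | (k + 2) => fun x y => ∃ z, chainR ρ (k + 1) x z ∧ 0 < ρ z y

lemma chainR_step {ρ : ℝ → ℝ → ℝ≥0∞} {k : ℕ} {x z y : ℝ}
    (h1 : chainR ρ k x z) (h2 : 0 < ρ z y) : chainR ρ (k + 1) x y := by
  match k with
  | 0 => exact h1.elim
  | (m + 1) => exact ⟨z, h1, h2⟩

lemma resolventK_pos_of_iterK {ρ : ℝ → ℝ → ℝ≥0∞} {k : ℕ} {x y : ℝ}
    (h : 0 < iterK ρ (k + 1) x y) : 0 < resolventK ρ x y := by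
  have hle : ((2 : ℝ≥0∞)⁻¹) ^ (k + 1) * iterK ρ (k + 1) x y ≤ resolventK ρ x y :=
    ENNReal.le_tsum k
  refine lt_of_lt_of_le ?_ hle
  exact ENNReal.mul_pos (pow_ne_zero _ (by simp)) h.ne'

lemma resolventK_eq_zero {ρ : ℝ → ℝ → ℝ≥0∞} {x y : ℝ}
    (h : ∀ k : ℕ, iterK ρ (k + 1) x y = 0) : resolventK ρ x y = 0 := by
  simp [resolventK, h]

section Main

variable {f φ : ℝ → ℝ}

private lemma phi_eq_zero (hφnn : ∀ t, 0 ≤ φ t)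
    (hφpos : {t | 0 < φ t} = Set.Ioo (-1 : ℝ) 1) {t : ℝ}
    (ht : t ∉ Set.Ioo (-1 : ℝ) 1) : φ t = 0 := by
  rcases (hφnn t).lt_or_eq with h | h
  · exact absurd (hφpos ▸ h : t ∈ Set.Ioo (-1 : ℝ) 1) ht
  · exact h.symm

private lemma lsc_exists (hφlsc : LowerSemicontinuous φ) {t0 : ℝ} (h : 0 < φ t0) :
    ∃ c : ℝ, 0 < c ∧ ∃ W : Set ℝ, IsOpen W ∧ t0 ∈ W ∧ ∀ t ∈ W, c ≤ φ t := by
  have h2 := hφlsc t0 (φ t0 / 2) (by linarith)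
  rw [eventually_nhds_iff] at h2
  obtain ⟨W, hW, hWo, ht0⟩ := h2
  exact ⟨φ t0 / 2, by linarith, W, hWo, ht0, fun t ht => (hW t ht).le⟩

/-- One step of the chain from the right of a ratchet point `a` with `f a ≥ a + 1`
cannot land at or below `a`. -/
private lemma one_step_up (hmono : Monotone f) (hφnn : ∀ t, 0 ≤ φ t)
    (hφpos : {t | 0 < φ t} = Set.Ioo (-1 : ℝ) 1) {a z y : ℝ}
    (ha : a + 1 ≤ f a) (hz : a ≤ z) (hy : y ≤ a) :
    ENNReal.ofReal (φ (y - f z)) = 0 := by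
  have hfz : f a ≤ f z := hmono hz
  have : φ (y - f z) = 0 := by
    refine phi_eq_zero hφnn hφpos ?_
    rintro ⟨h1, -⟩
    linarith
  simp [this]

private lemma one_step_down (hmono : Monotone f) (hφnn : ∀ t, 0 ≤ φ t)
    (hφpos : {t | 0 < φ t} = Set.Ioo (-1 : ℝ) 1) {a z y : ℝ}
    (ha : f a ≤ a - 1) (hz : z ≤ a) (hy : a ≤ y) :
    ENNReal.ofReal (φ (y - f z)) = 0 := by
  have hfz : f z ≤ f a := hmono hz
  have : φ (y - f z) = 0 := by
    refine phi_eq_zero hφnn hφpos ?_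
    rintro ⟨-, h2⟩
    linarith
  simp [this]

private lemma ratchet_up (hmono : Monotone f) (hφnn : ∀ t, 0 ≤ φ t)
    (hφpos : {t | 0 < φ t} = Set.Ioo (-1 : ℝ) 1) {a : ℝ} (ha : a + 1 ≤ f a) :
    ∀ k z y, a ≤ z → y ≤ a →
      iterK (fun x y => ENNReal.ofReal (φ (y - f x))) k z y = 0 := by
  intro k
  induction k with
  | zero => intro z y _ _; simp [iterK]
  | succ k ih =>
    cases k with
    | zero =>
      intro z y hz hy
      simpa [iterK] using one_step_up hmono hφnn hφpos ha hz hy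
    | succ m =>
      intro z y hz hy
      show (∫⁻ v, iterK (fun x y => ENNReal.ofReal (φ (y - f x))) (m + 1) z v *
        ENNReal.ofReal (φ (y - f v))) = 0
      rw [show (fun v => iterK (fun x y => ENNReal.ofReal (φ (y - f x))) (m + 1) z v *
          ENNReal.ofReal (φ (y - f v))) = fun _ => (0 : ℝ≥0∞) from ?_, lintegral_zero]
      funext v
      by_cases hv : a ≤ v
      · rw [one_step_up hmono hφnn hφpos ha hv hy, mul_zero]
      · rw [ih z v hz (le_of_not_ge hv), zero_mul]

private lemma ratchet_down (hmono : Monotone f) (hφnn : ∀ t, 0 ≤ φ t)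
    (hφpos : {t | 0 < φ t} = Set.Ioo (-1 : ℝ) 1) {a : ℝ} (ha : f a ≤ a - 1) :
    ∀ k z y, z ≤ a → a ≤ y →
      iterK (fun x y => ENNReal.ofReal (φ (y - f x))) k z y = 0 := by
  intro k
  induction k with
  | zero => intro z y _ _; simp [iterK]
  | succ k ih =>
    cases k with
    | zero =>
      intro z y hz hy
      simpa [iterK] using one_step_down hmono hφnn hφpos ha hz hy
    | succ m =>
      intro z y hz hy
      show (∫⁻ v, iterK (fun x y => ENNReal.ofReal (φ (y - f x))) (m + 1) z v *
        ENNReal.ofReal (φ (y - f v))) = 0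
      rw [show (fun v => iterK (fun x y => ENNReal.ofReal (φ (y - f x))) (m + 1) z v *
          ENNReal.ofReal (φ (y - f v))) = fun _ => (0 : ℝ≥0∞) from ?_, lintegral_zero]
      funext v
      by_cases hv : v ≤ a
      · rw [one_step_down hmono hφnn hφpos ha hv hy, mul_zero]
      · rw [ih z v hz (le_of_not_ge hv), zero_mul]

/-- A chain of positive one-step densities gives a locally uniform lower bound for the
iterated density. -/
private lemma chain_iterK_pos (hf : Continuous f) (hφlsc : LowerSemicontinuous φ) :
    ∀ k x y, chainR (fun x y => ENNReal.ofReal (φ (y - f x))) k x y →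
      ∃ V : Set ℝ, IsOpen V ∧ y ∈ V ∧ ∃ c : ℝ≥0∞, 0 < c ∧
        ∀ y' ∈ V, c ≤ iterK (fun x y => ENNReal.ofReal (φ (y - f x))) k x y' := by
  intro k
  induction k with
  | zero => intro x y h; exact h.elim
  | succ k ih =>
    cases k with
    | zero =>
      intro x y h
      have hpos : 0 < φ (y - f x) := ENNReal.ofReal_pos.mp h
      obtain ⟨c, hc, W, hWo, hyW, hW⟩ := lsc_exists hφlsc hpos
      refine ⟨(fun y' => y' - f x) ⁻¹' W,
        (continuous_id.sub continuous_const).isOpen_preimage W hWo, hyW,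
        ENNReal.ofReal c, ENNReal.ofReal_pos.mpr hc, fun y' hy' => ?_⟩
      show ENNReal.ofReal c ≤ ENNReal.ofReal (φ (y' - f x))
      exact ENNReal.ofReal_le_ofReal (hW _ hy')
    | succ m =>
      intro x y h
      obtain ⟨z, hch, hzy⟩ := h
      obtain ⟨V, hVo, hzV, c, hc, hV⟩ := ih x z hch
      have hpos : 0 < φ (y - f z) := ENNReal.ofReal_pos.mp hzy
      obtain ⟨c', hc', W, hWo, hmemW, hW⟩ := lsc_exists hφlsc hpos
      have hg : Continuous fun p : ℝ × ℝ => p.2 - f p.1 :=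
        continuous_snd.sub (hf.comp continuous_fst)
      have hpre : IsOpen ((fun p : ℝ × ℝ => p.2 - f p.1) ⁻¹' W) := hg.isOpen_preimage W hWo
      obtain ⟨u, v, hu, hv, hzu, hyv, huv⟩ :=
        isOpen_prod_iff.mp hpre z y hmemW
      have hne : (V ∩ u).Nonempty := ⟨z, hzV, hzu⟩
      have hμ : 0 < volume (V ∩ u) := (hVo.inter hu).measure_pos volume hne
      refine ⟨v, hv, hyv, c * ENNReal.ofReal c' * volume (V ∩ u),
        ENNReal.mul_pos (ENNReal.mul_pos hc.ne' (ENNReal.ofReal_pos.mpr hc').ne').ne' hμ.ne',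
        fun y' hy' => ?_⟩
      have hbound : ∀ w, (V ∩ u).indicator (fun _ => c * ENNReal.ofReal c') w ≤
          iterK (fun x y => ENNReal.ofReal (φ (y - f x))) (m + 1) x w *
            ENNReal.ofReal (φ (y' - f w)) := by
        intro w
        by_cases hw : w ∈ V ∩ u
        · rw [Set.indicator_of_mem hw]
          refine mul_le_mul' (hV w hw.1) (ENNReal.ofReal_le_ofReal ?_)
          exact hW _ (huv (Set.mk_mem_prod hw.2 hy'))
        · rw [Set.indicator_of_notMem hw]; exact zero_le
      calc c * ENNReal.ofReal c' * volume (V ∩ u)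
          = ∫⁻ w, (V ∩ u).indicator (fun _ => c * ENNReal.ofReal c') w := by
            rw [lintegral_indicator_const (hVo.inter hu).measurableSet]
        _ ≤ ∫⁻ w, iterK (fun x y => ENNReal.ofReal (φ (y - f x))) (m + 1) x w *
              ENNReal.ofReal (φ (y' - f w)) := lintegral_mono hbound
        _ = iterK (fun x y => ENNReal.ofReal (φ (y - f x))) (m + 2) x y' := rfl

/-- Within an open preconnected subset of `B`, chains exist between any two points. -/
private lemma connected_chain (hf : Continuous f)
    (hφpos : {t | 0 < φ t} = Set.Ioo (-1 : ℝ) 1) {U : Set ℝ}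
    (hUo : IsOpen U) (hUc : IsPreconnected U)
    (hUB : ∀ y ∈ U, f y - y ∈ Set.Ioo (-1 : ℝ) 1) {u v : ℝ}
    (hu : u ∈ U) (hv : v ∈ U) :
    ∃ k, chainR (fun x y => ENNReal.ofReal (φ (y - f x))) k u v := by
  have hmem : ∀ t : ℝ, 0 < φ t ↔ t ∈ Set.Ioo (-1 : ℝ) 1 := fun t => Set.ext_iff.mp hφpos t
  set ρ : ℝ → ℝ → ℝ≥0∞ := fun x y => ENNReal.ofReal (φ (y - f x)) with hρ
  have hρpos : ∀ x y : ℝ, y - f x ∈ Set.Ioo (-1 : ℝ) 1 → 0 < ρ x y := fun x y h =>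
    ENNReal.ofReal_pos.mpr ((hmem _).mpr h)
  have hself : ∀ y ∈ U, y - f y ∈ Set.Ioo (-1 : ℝ) 1 := by
    intro y hy
    obtain ⟨h1, h2⟩ := hUB y hy
    exact ⟨by linarith, by linarith⟩
  set P : ℝ → Prop := fun t => ∃ k, chainR ρ k u t with hP
  by_contra hPv
  -- forward neighborhoods
  have fwd : ∀ y ∈ U, ∃ N : Set ℝ, IsOpen N ∧ y ∈ N ∧ ∀ t ∈ N, 0 < ρ y t := by
    intro y hy
    refine ⟨(fun t => t - f y) ⁻¹' Set.Ioo (-1 : ℝ) 1,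
      (continuous_id.sub continuous_const).isOpen_preimage _ isOpen_Ioo,
      hself y hy, fun t ht => hρpos _ _ ht⟩
  have bwd : ∀ y ∈ U, ∃ N : Set ℝ, IsOpen N ∧ y ∈ N ∧ ∀ t ∈ N, 0 < ρ t y := by
    intro y hy
    refine ⟨(fun t => y - f t) ⁻¹' Set.Ioo (-1 : ℝ) 1,
      (continuous_const.sub hf).isOpen_preimage _ isOpen_Ioo,
      hself y hy, fun t ht => hρpos _ _ ht⟩
  set V1 : Set ℝ := ⋃₀ {N | IsOpen N ∧ ∀ t ∈ N, P t} with hV1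
  set V2 : Set ℝ := ⋃₀ {N | IsOpen N ∧ ∀ t ∈ N, ¬ P t} with hV2
  have hV1o : IsOpen V1 := isOpen_sUnion fun _ h => h.1
  have hV2o : IsOpen V2 := isOpen_sUnion fun _ h => h.1
  have hcover : U ⊆ V1 ∪ V2 := by
    intro y hy
    obtain ⟨N, hNo, hyN, hNpos⟩ := fwd y hy
    by_cases hPy : P y
    · exact Or.inl ⟨N, ⟨hNo, fun t ht => by
        obtain ⟨k, hk⟩ := hPy
        exact ⟨k + 1, chainR_step hk (hNpos t ht)⟩⟩, hyN⟩
    · obtain ⟨N', hN'o, hyN', hN'pos⟩ := bwd y hy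
      refine Or.inr ⟨N', ⟨hN'o, fun t ht hPt => hPy ?_⟩, hyN'⟩
      obtain ⟨k, hk⟩ := hPt
      exact ⟨k + 1, chainR_step hk (hN'pos t ht)⟩
  have h1 : (U ∩ V1).Nonempty := by
    obtain ⟨N, hNo, huN, hNpos⟩ := fwd u hu
    exact ⟨u, hu, N, ⟨hNo, fun t ht => ⟨1, hNpos t ht⟩⟩, huN⟩
  have h2 : (U ∩ V2).Nonempty := by
    obtain ⟨N', hN'o, hvN', hN'pos⟩ := bwd v hv
    refine ⟨v, hv, N', ⟨hN'o, fun t ht hPt => hPv ?_⟩, hvN'⟩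
    obtain ⟨k, hk⟩ := hPt
    exact ⟨k + 1, chainR_step hk (hN'pos t ht)⟩
  obtain ⟨t, htU, ht1, ht2⟩ := hUc V1 V2 hV1o hV2o hcover h1 h2
  obtain ⟨N, ⟨-, hN⟩, htN⟩ := ht1
  obtain ⟨N', ⟨-, hN'⟩, htN'⟩ := ht2
  exact hN' t htN' (hN t htN)

private lemma comp_resolvent_pos (hf : Continuous f) (hmono : Monotone f)
    (hφlsc : LowerSemicontinuous φ)
    (hφpos : {t | 0 < φ t} = Set.Ioo (-1 : ℝ) 1) {U : Set ℝ}
    (hUo : IsOpen U) (hUc : IsPreconnected U)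
    (hUB : ∀ y ∈ U, f y - y ∈ Set.Ioo (-1 : ℝ) 1) {u v : ℝ}
    (hu : u ∈ U) (hv : v ∈ U) :
    0 < resolventK (fun x y => ENNReal.ofReal (φ (y - f x))) u v := by
  obtain ⟨k, hch⟩ := connected_chain hf hφpos hUo hUc hUB hu hv
  obtain ⟨V, hVo, hvV, c, hc, hV⟩ := chain_iterK_pos hf hφlsc k u v hch
  have hk : k ≠ 0 := by rintro rfl; exact hch
  obtain ⟨m, rfl⟩ := Nat.exists_eq_succ_of_ne_zero hk
  exact resolventK_pos_of_iterK (lt_of_lt_of_le hc (hV v hvV))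

/-- Positive return probability forces membership in `B`. -/
private lemma mem_B_of_pos (hmono : Monotone f) (hφnn : ∀ t, 0 ≤ φ t)
    (hφpos : {t | 0 < φ t} = Set.Ioo (-1 : ℝ) 1) {z : ℝ}
    (h : 0 < resolventK (fun x y => ENNReal.ofReal (φ (y - f x))) z z) :
    f z - z ∈ Set.Ioo (-1 : ℝ) 1 := by
  by_contra hz
  rw [Set.mem_Ioo, not_and_or, not_lt, not_lt] at hz
  rcases hz with h1 | h1
  · have := ratchet_down hmono hφnn hφpos (a := z) (by linarith)
    exact h.ne' (resolventK_eq_zero fun k => this (k + 1) z z le_rfl le_rfl)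
  · have := ratchet_up hmono hφnn hφpos (a := z) (by linarith)
    exact h.ne' (resolventK_eq_zero fun k => this (k + 1) z z le_rfl le_rfl)

/-- Mutual communication forces membership in the same connected component of `B`. -/
private lemma same_comp (hmono : Monotone f) (hφnn : ∀ t, 0 ≤ φ t)
    (hφpos : {t | 0 < φ t} = Set.Ioo (-1 : ℝ) 1) {x y : ℝ}
    (hxy : 0 < resolventK (fun x y => ENNReal.ofReal (φ (y - f x))) x y)
    (hyx : 0 < resolventK (fun x y => ENNReal.ofReal (φ (y - f x))) y x) :
    y ∈ connectedComponentIn {x : ℝ | f x - x ∈ Set.Ioo (-1 : ℝ) 1} x := by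
  set B : Set ℝ := {x : ℝ | f x - x ∈ Set.Ioo (-1 : ℝ) 1} with hB
  by_cases hsub : Set.uIcc x y ⊆ B
  · exact isPreconnected_uIcc.subset_connectedComponentIn Set.left_mem_uIcc hsub
      Set.right_mem_uIcc
  · obtain ⟨a, haI, haB⟩ := Set.not_subset.mp hsub
    have haB' : ¬ (f a - a ∈ Set.Ioo (-1 : ℝ) 1) := haB
    rw [Set.mem_Ioo, not_and_or, not_lt, not_lt] at haB'
    rw [Set.mem_uIcc] at haI
    exfalso
    rcases haI with ⟨hxa, hay⟩ | ⟨hya, hax⟩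
    · rcases haB' with h1 | h1
      · exact hxy.ne' (resolventK_eq_zero fun k =>
          ratchet_down hmono hφnn hφpos (a := a) (by linarith) (k + 1) x y hxa hay)
      · exact hyx.ne' (resolventK_eq_zero fun k =>
          ratchet_up hmono hφnn hφpos (a := a) (by linarith) (k + 1) y x hay hxa)
    · rcases haB' with h1 | h1
      · exact hyx.ne' (resolventK_eq_zero fun k =>
          ratchet_down hmono hφnn hφpos (a := a) (by linarith) (k + 1) y x hya hax)
      · exact hxy.ne' (resolventK_eq_zero fun k =>
          ratchet_up hmono hφnn hφpos (a := a) (by linarith) (k + 1) x y hax hya)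

end Main

/-- Let `f : ℝ → ℝ` be continuous nondecreasing, `φ` a lower
semicontinuous bounded probability density with positivity set exactly `(−1,1)`, and
consider the Markov chain with kernel density `ρ(x,y) = φ(y − f(x))`. Let
`B = {x : f(x) − x ∈ (−1,1)}`. Then the communicating classes of the chain are exactly the
connected components of `B`. -/
theorem stmt15 (f : ℝ → ℝ) (hf : Continuous f) (hmono : Monotone f)
    (φ : ℝ → ℝ) (hφnn : ∀ t, 0 ≤ φ t)
    (hφlsc : LowerSemicontinuous φ) (hφbdd : ∃ M : ℝ, ∀ t, φ t ≤ M)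
    (hφint : ∫⁻ t, ENNReal.ofReal (φ t) = 1)
    (hφpos : {t | 0 < φ t} = Set.Ioo (-1 : ℝ) 1) :
    ∀ A : Set ℝ,
      IsCommClassR (fun x y => ENNReal.ofReal (φ (y - f x))) A ↔
        ∃ x ∈ {x : ℝ | f x - x ∈ Set.Ioo (-1 : ℝ) 1},
          A = connectedComponentIn {x : ℝ | f x - x ∈ Set.Ioo (-1 : ℝ) 1} x := by
  set B : Set ℝ := {x : ℝ | f x - x ∈ Set.Ioo (-1 : ℝ) 1} with hBdef
  have hBopen : IsOpen B := by
    have : B = (fun x => f x - x) ⁻¹' Set.Ioo (-1 : ℝ) 1 := rfl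
    rw [this]
    exact (hf.sub continuous_id).isOpen_preimage _ isOpen_Ioo
  have hcompB : ∀ x : ℝ, connectedComponentIn B x ⊆ B := fun x =>
    connectedComponentIn_subset B x
  have hcomp_pos : ∀ x, x ∈ B → ∀ u ∈ connectedComponentIn B x,
      ∀ v ∈ connectedComponentIn B x,
      0 < resolventK (fun x y => ENNReal.ofReal (φ (y - f x))) u v := by
    intro x hx u hu v hv
    exact comp_resolvent_pos hf hmono hφlsc hφpos (hBopen.connectedComponentIn)
      isPreconnected_connectedComponentIn (fun y hy => hcompB x hy) hu hv
  intro A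
  constructor
  · rintro ⟨⟨x, hxA⟩, hpos, hmax⟩
    have hxB : x ∈ B := mem_B_of_pos hmono hφnn hφpos (hpos x hxA x hxA)
    refine ⟨x, hxB, ?_⟩
    have hAU : A ⊆ connectedComponentIn B x := by
      intro a ha
      exact same_comp hmono hφnn hφpos (hpos x hxA a ha) (hpos a ha x hxA)
    exact (hmax _ hAU (hcomp_pos x hxB)).symm
  · rintro ⟨x, hxB, rfl⟩
    refine ⟨⟨x, mem_connectedComponentIn hxB⟩, hcomp_pos x hxB, ?_⟩
    intro C hUC hCpos
    have hxC : x ∈ C := hUC (mem_connectedComponentIn hxB)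
    refine Set.Subset.antisymm (fun c hc => ?_) hUC
    exact same_comp hmono hφnn hφpos (hCpos x hxC c hc) (hCpos c hc x hxC)
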